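/- arXiv:1704.02595 — 2 statements merged into one kernel-verified Lean document; each statement's English description precedes it below -/
import Mathlib

section
/- Let G be a connected simple graph and suppose there exist a real number α ≥ 1 and constants C₁, C₂ > 0 such that C₁ r^α ≤ |B_r(G,x)| ≤ C₂ r^α for every vertex x of G and every integer r ≥ 1. Then G has Property A. -/
open scoped ENNReal


/-- The `r`-ball around `v` in a simple graph. -/
def gball {V : Type*} (G : SimpleGraph V) (r : ℕ) (v : V) : Set V :=
  {u : V | G.Reachable v u ∧ G.dist v u ≤ r}

/-- Property A for a graph: for every `n ≥ 1` there are `Rₙ` and unit vectors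
`ξⁿ_v ∈ ℓ²(V;ℝ)` supported in `B_{Rₙ}(v)` with `‖ξⁿ_x − ξⁿ_y‖ ≤ 1/n` whenever
`d_G(x,y) ≤ n`. -/
def HasPropertyA {V : Type*} (G : SimpleGraph V) : Prop :=
  ∀ n : ℕ, 1 ≤ n → ∃ (R : ℕ) (ξ : V → lp (fun _ : V => ℝ) 2),
    (∀ v : V, ‖ξ v‖ = 1) ∧
    (∀ v u : V, (ξ v : V → ℝ) u ≠ 0 → u ∈ gball G R v) ∧
    (∀ v w : V, G.Reachable v w → G.dist v w ≤ n → ‖ξ v - ξ w‖ ≤ 1 / (n : ℝ))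

/-- Normalization is 2-Lipschitz relative to the norm of one of the vectors. -/
lemma normalize_sub_le_aux {E : Type*} [NormedAddCommGroup E] [NormedSpace ℝ E]
    {a b : E} (ha : a ≠ 0) (hb : b ≠ 0) :
    ‖‖a‖⁻¹ • a - ‖b‖⁻¹ • b‖ ≤ 2 * ‖a - b‖ / ‖a‖ := by
  have ha' : (0:ℝ) < ‖a‖ := norm_pos_iff.2 ha
  have hb' : (0:ℝ) < ‖b‖ := norm_pos_iff.2 hb
  have key : ‖a‖⁻¹ • a - ‖b‖⁻¹ • b = ‖a‖⁻¹ • (a - b) + (‖a‖⁻¹ - ‖b‖⁻¹) • b := by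
    rw [smul_sub, sub_smul]; abel
  have h1 : ‖(‖a‖⁻¹ : ℝ) • (a - b)‖ = ‖a - b‖ / ‖a‖ := by
    rw [norm_smul, norm_inv, norm_norm]; ring
  have h2 : ‖((‖a‖⁻¹ - ‖b‖⁻¹ : ℝ)) • b‖ ≤ ‖a - b‖ / ‖a‖ := by
    rw [norm_smul, Real.norm_eq_abs]
    have e : ‖a‖⁻¹ - ‖b‖⁻¹ = (‖b‖ - ‖a‖) / (‖a‖ * ‖b‖) := by
      field_simp
    have habs : |‖b‖ - ‖a‖| ≤ ‖a - b‖ := by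
      have := abs_norm_sub_norm_le b a
      rwa [norm_sub_rev] at this
    rw [e, abs_div, abs_of_pos (by positivity : (0:ℝ) < ‖a‖ * ‖b‖)]
    have e2 : |‖b‖ - ‖a‖| / (‖a‖ * ‖b‖) * ‖b‖ = |‖b‖ - ‖a‖| / ‖a‖ := by
      field_simp
    rw [e2]
    gcongr
  calc ‖‖a‖⁻¹ • a - ‖b‖⁻¹ • b‖
      = ‖‖a‖⁻¹ • (a - b) + (‖a‖⁻¹ - ‖b‖⁻¹) • b‖ := by rw [key]
    _ ≤ ‖(‖a‖⁻¹ : ℝ) • (a - b)‖ + ‖((‖a‖⁻¹ - ‖b‖⁻¹ : ℝ)) • b‖ := norm_add_le _ _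
    _ ≤ ‖a - b‖ / ‖a‖ + ‖a - b‖ / ‖a‖ := by rw [h1]; gcongr
    _ = 2 * ‖a - b‖ / ‖a‖ := by ring

set_option maxHeartbeats 1000000 in
/-- a connected graph of uniformly polynomial growth
(`C₁ rᵅ ≤ |B_r(x)| ≤ C₂ rᵅ` for all vertices `x` and `r ≥ 1`) has Property A. -/
theorem propertyA_of_polynomial_growth
    {V : Type*} (G : SimpleGraph V) (hconn : G.Connected)
    (α : ℝ) (hα : 1 ≤ α) (C₁ C₂ : ℝ) (hC₁ : 0 < C₁) (hC₂ : 0 < C₂)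
    (hgrowth : ∀ (x : V) (r : ℕ), 1 ≤ r →
      (gball G r x).Finite ∧
      C₁ * (r : ℝ) ^ α ≤ ((gball G r x).ncard : ℝ) ∧
      ((gball G r x).ncard : ℝ) ≤ C₂ * (r : ℝ) ^ α) :
    HasPropertyA G := by
  intro n hn
  have hα0 : (0:ℝ) ≤ α := le_trans zero_le_one hα
  have hn1 : (1:ℝ) ≤ (n:ℝ) := by exact_mod_cast hn
  have hnpos : (0:ℝ) < (n:ℝ) := lt_of_lt_of_le one_pos hn1
  -- constants
  set c : ℝ := Real.sqrt C₂ * Real.sqrt (4 ^ α) / Real.sqrt C₁ with hc_def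
  have hsC₁ : (0:ℝ) < Real.sqrt C₁ := Real.sqrt_pos.2 hC₁
  have hsC₂ : (0:ℝ) < Real.sqrt C₂ := Real.sqrt_pos.2 hC₂
  have hs4 : (0:ℝ) < Real.sqrt (4 ^ α) := Real.sqrt_pos.2 (Real.rpow_pos_of_pos (by norm_num) α)
  have hc0 : 0 < c := by positivity
  -- radius
  set S : ℕ := n + n * ⌈2 * (n:ℝ) * c⌉₊ with hS_def
  have hSn : n ≤ S := Nat.le_add_right n _
  have hS1 : 1 ≤ S := le_trans hn hSn
  have hS1' : (1:ℝ) ≤ (S:ℝ) := by exact_mod_cast hS1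
  have hSpos : (0:ℝ) < (S:ℝ) := lt_of_lt_of_le one_pos hS1'
  have hSc : 2 * (n:ℝ)^2 * c ≤ (S:ℝ) := by
    have h1 : 2 * (n:ℝ) * c ≤ (⌈2 * (n:ℝ) * c⌉₊ : ℝ) := Nat.le_ceil _
    have h2 : (n:ℝ) * (2 * (n:ℝ) * c) ≤ (n:ℝ) * (⌈2 * (n:ℝ) * c⌉₊ : ℝ) := by
      exact mul_le_mul_of_nonneg_left h1 hnpos.le
    have h3 : ((S:ℕ):ℝ) = (n:ℝ) + (n:ℝ) * (⌈2 * (n:ℝ) * c⌉₊ : ℝ) := by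
      rw [hS_def]; push_cast; ring
    rw [h3]; nlinarith
  set R : ℕ := 2 * S with hR_def
  have hR1 : 1 ≤ R := by omega
  set Q : ℕ := R + n with hQ_def
  have hQ1 : 1 ≤ Q := by omega
  -- basic graph facts
  have hreach : ∀ v u : V, G.Reachable v u := fun v u => hconn v u
  have htri : ∀ x y u : V, G.dist x u ≤ G.dist x y + G.dist y u :=
    fun x y u => hconn.dist_triangle
  -- the tent function
  set f : V → V → ℝ := fun v u => max ((R:ℝ) - (G.dist v u : ℝ)) 0 with hf_def
  have hf_nonneg : ∀ v u, 0 ≤ f v u := fun v u => le_max_right _ _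
  have hf_ne : ∀ v u, f v u ≠ 0 → G.dist v u ≤ R := by
    intro v u h
    by_contra hlt
    push_neg at hlt
    apply h
    have : (R:ℝ) - (G.dist v u : ℝ) ≤ 0 := by
      have : (R:ℝ) ≤ (G.dist v u : ℝ) := by exact_mod_cast hlt.le
      linarith
    simp [hf_def, max_eq_right this]
  -- support finsets
  have hfin : ∀ (v : V) (r : ℕ), 1 ≤ r → (gball G r v).Finite := fun v r hr => (hgrowth v r hr).1
  -- membership in lp
  have hp2 : 0 < (2:ℝ≥0∞).toReal := by norm_num
  have hmem : ∀ v : V, Memℓp (f v) 2 := by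
    intro v
    apply memℓp_gen
    apply summable_of_ne_finset_zero (s := (hfin v R hR1).toFinset)
    intro u hu
    have : f v u = 0 := by
      by_contra h
      exact hu ((hfin v R hR1).mem_toFinset.2 ⟨hreach v u, hf_ne v u h⟩)
    rw [this]
    simp [Real.zero_rpow hp2.ne']
  set F : V → lp (fun _ : V => ℝ) 2 := fun v => ⟨f v, hmem v⟩ with hF_def
  have hFapp : ∀ v u, (F v : V → ℝ) u = f v u := fun v u => rfl
  -- norm squared formula
  have hnormsq : ∀ g : lp (fun _ : V => ℝ) 2, ‖g‖^2 = ∑' u, ((g : V → ℝ) u)^2 := by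
    intro g
    have h := lp.norm_rpow_eq_tsum hp2 g
    have e1 : ((2:ℝ≥0∞).toReal) = ((2:ℕ):ℝ) := by norm_num
    rw [e1] at h
    simp only [Real.rpow_natCast] at h
    simpa [Real.norm_eq_abs, sq_abs] using h
  -- lower bound on the norm of F v
  have hFlow : ∀ v : V, (S:ℝ) * Real.sqrt (C₁ * (S:ℝ)^α) ≤ ‖F v‖ := by
    intro v
    have hsummable : Summable (fun u => (f v u)^2) := by
      apply summable_of_ne_finset_zero (s := (hfin v R hR1).toFinset)
      intro u hu
      have : f v u = 0 := by
        by_contra h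
        exact hu ((hfin v R hR1).mem_toFinset.2 ⟨hreach v u, hf_ne v u h⟩)
      rw [this]; ring
    have hlow : (S:ℝ)^2 * (C₁ * (S:ℝ)^α) ≤ ∑' u, (f v u)^2 := by
      have hcard : C₁ * (S:ℝ)^α ≤ ((gball G S v).ncard : ℝ) := (hgrowth v S hS1).2.1
      have hsum1 : ∑ u ∈ (hfin v S hS1).toFinset, (S:ℝ)^2 ≤
          ∑ u ∈ (hfin v S hS1).toFinset, (f v u)^2 := by
        apply Finset.sum_le_sum
        intro u hu
        have hu' : G.dist v u ≤ S := ((hfin v S hS1).mem_toFinset.1 hu).2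
        have h1 : (S:ℝ) ≤ f v u := by
          have hd : (G.dist v u : ℝ) ≤ (S:ℝ) := by exact_mod_cast hu'
          have : (S:ℝ) ≤ (R:ℝ) - (G.dist v u : ℝ) := by
            have : (R:ℝ) = 2 * (S:ℝ) := by rw [hR_def]; push_cast; ring
            linarith
          exact le_trans this (le_max_left _ _)
        have := mul_le_mul h1 h1 hSpos.le (hf_nonneg v u)
        nlinarith
      have hsum2 : ∑ u ∈ (hfin v S hS1).toFinset, (f v u)^2 ≤ ∑' u, (f v u)^2 :=
        Summable.sum_le_tsum _ (fun u _ => sq_nonneg _) hsummable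
      have hcount : ∑ u ∈ (hfin v S hS1).toFinset, (S:ℝ)^2
          = ((gball G S v).ncard : ℝ) * (S:ℝ)^2 := by
        rw [Finset.sum_const, Set.ncard_eq_toFinset_card _ (hfin v S hS1)]
        simp [mul_comm]
      nlinarith
    have hsq : ((S:ℝ) * Real.sqrt (C₁ * (S:ℝ)^α))^2 ≤ ‖F v‖^2 := by
      rw [mul_pow, Real.sq_sqrt (by positivity), hnormsq]
      simpa [hFapp] using hlow
    calc (S:ℝ) * Real.sqrt (C₁ * (S:ℝ)^α)
        = Real.sqrt (((S:ℝ) * Real.sqrt (C₁ * (S:ℝ)^α))^2) := by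
          rw [Real.sqrt_sq (by positivity)]
      _ ≤ Real.sqrt (‖F v‖^2) := Real.sqrt_le_sqrt hsq
      _ = ‖F v‖ := Real.sqrt_sq (norm_nonneg _)
  have hFpos : ∀ v : V, (0:ℝ) < ‖F v‖ :=
    fun v => lt_of_lt_of_le (by positivity) (hFlow v)
  have hFnz : ∀ v : V, F v ≠ 0 := fun v h => by
    have := hFpos v; rw [h, norm_zero] at this; exact lt_irrefl _ this
  -- upper bound on the norm of differences
  have hFdiff : ∀ x y : V, G.dist x y ≤ n →
      ‖F x - F y‖ ≤ (n:ℝ) * Real.sqrt (C₂ * (4 * (S:ℝ))^α) := by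
    intro x y hxy
    -- pointwise bound
    have hpt : ∀ u : V, |f x u - f y u| ≤ (n:ℝ) := by
      intro u
      have h1 := abs_max_sub_max_le_abs ((R:ℝ) - (G.dist x u : ℝ)) ((R:ℝ) - (G.dist y u : ℝ)) 0
      have h2 : |((R:ℝ) - (G.dist x u : ℝ)) - ((R:ℝ) - (G.dist y u : ℝ))|
          = |(G.dist y u : ℝ) - (G.dist x u : ℝ)| := by ring_nf
      have h3 : |(G.dist y u : ℝ) - (G.dist x u : ℝ)| ≤ (n:ℝ) := by
        rw [abs_sub_le_iff]
        constructor
        · have t1 : G.dist y u ≤ G.dist y x + G.dist x u := htri y x u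
          have t2 : G.dist y x = G.dist x y := G.dist_comm
          have : G.dist y u ≤ n + G.dist x u := by omega
          have := (Nat.cast_le (α := ℝ)).2 this
          push_cast at this ⊢
          linarith
        · have t1 : G.dist x u ≤ G.dist x y + G.dist y u := htri x y u
          have : G.dist x u ≤ n + G.dist y u := by omega
          have := (Nat.cast_le (α := ℝ)).2 this
          push_cast at this ⊢
          linarith
      calc |f x u - f y u| ≤ |((R:ℝ) - (G.dist x u : ℝ)) - ((R:ℝ) - (G.dist y u : ℝ))| := h1
        _ ≤ (n:ℝ) := by rw [h2]; exact h3
    -- support of the difference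
    have hdsupp : ∀ u : V, u ∉ (hfin x Q hQ1).toFinset → f x u - f y u = 0 := by
      intro u hu
      have hQd : Q < G.dist x u := by
        by_contra h
        push_neg at h
        exact hu ((hfin x Q hQ1).mem_toFinset.2 ⟨hreach x u, h⟩)
      have hx0 : f x u = 0 := by
        by_contra h
        have := hf_ne x u h
        omega
      have hy0 : f y u = 0 := by
        by_contra h
        have hyR := hf_ne y u h
        have := htri x y u
        omega
      rw [hx0, hy0, sub_zero]
    have hQ4S : C₂ * ((Q:ℕ):ℝ)^α ≤ C₂ * (4 * (S:ℝ))^α := by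
      have h45 : ((Q:ℕ):ℝ) ≤ 4 * (S:ℝ) := by
        have hq4 : Q ≤ 4 * S := by omega
        have := (Nat.cast_le (α := ℝ)).2 hq4
        push_cast at this
        linarith
      have := Real.rpow_le_rpow (Nat.cast_nonneg Q) h45 hα0
      exact mul_le_mul_of_nonneg_left this hC₂.le
    have hsqd : ‖F x - F y‖^2 ≤ ((n:ℝ) * Real.sqrt (C₂ * (4 * (S:ℝ))^α))^2 := by
      rw [hnormsq, mul_pow, Real.sq_sqrt (by positivity)]
      have hcoe : ∀ u : V, ((F x - F y : lp (fun _ : V => ℝ) 2) : V → ℝ) u = f x u - f y u := by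
        intro u
        rw [lp.coeFn_sub]
        simp [hFapp]
      calc ∑' u, (((F x - F y : lp (fun _ : V => ℝ) 2) : V → ℝ) u)^2
          = ∑ u ∈ (hfin x Q hQ1).toFinset, (f x u - f y u)^2 := by
            rw [tsum_eq_sum (s := (hfin x Q hQ1).toFinset)]
            · exact Finset.sum_congr rfl (fun u _ => by rw [hcoe])
            · intro u hu
              rw [hcoe, hdsupp u hu]
              ring
        _ ≤ ∑ u ∈ (hfin x Q hQ1).toFinset, (n:ℝ)^2 := by
            apply Finset.sum_le_sum
            intro u _
            have := hpt u
            nlinarith [abs_nonneg (f x u - f y u), sq_abs (f x u - f y u),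
              neg_abs_le (f x u - f y u), le_abs_self (f x u - f y u)]
        _ = ((gball G Q x).ncard : ℝ) * (n:ℝ)^2 := by
            rw [Finset.sum_const, Set.ncard_eq_toFinset_card _ (hfin x Q hQ1)]
            simp [mul_comm]
        _ ≤ (n:ℝ)^2 * (C₂ * (4 * (S:ℝ))^α) := by
            have h1 : ((gball G Q x).ncard : ℝ) ≤ C₂ * ((Q:ℕ):ℝ)^α := (hgrowth x Q hQ1).2.2
            nlinarith [sq_nonneg (n:ℝ)]
    calc ‖F x - F y‖ = Real.sqrt (‖F x - F y‖^2) := (Real.sqrt_sq (norm_nonneg _)).symm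
      _ ≤ Real.sqrt (((n:ℝ) * Real.sqrt (C₂ * (4 * (S:ℝ))^α))^2) := Real.sqrt_le_sqrt hsqd
      _ = (n:ℝ) * Real.sqrt (C₂ * (4 * (S:ℝ))^α) := Real.sqrt_sq (by positivity)
  -- the normalized vectors
  set ξ : V → lp (fun _ : V => ℝ) 2 := fun v => ‖F v‖⁻¹ • F v with hξ_def
  refine ⟨R, ξ, ?_, ?_, ?_⟩
  · intro v
    rw [hξ_def]
    simp only [norm_smul, norm_inv, norm_norm]
    exact inv_mul_cancel₀ (hFpos v).ne'
  · intro v u hne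
    have : (ξ v : V → ℝ) u = ‖F v‖⁻¹ * f v u := by
      rw [hξ_def]
      simp only [lp.coeFn_smul, Pi.smul_apply, smul_eq_mul, hFapp]
    rw [this] at hne
    have hfne : f v u ≠ 0 := by
      intro h; apply hne; rw [h, mul_zero]
    exact ⟨hreach v u, hf_ne v u hfne⟩
  · intro x y _ hxy
    have key := normalize_sub_le_aux (hFnz x) (hFnz y)
    have step2 : 2 * ‖F x - F y‖ / ‖F x‖
        ≤ 2 * ((n:ℝ) * Real.sqrt (C₂ * (4 * (S:ℝ))^α)) / ((S:ℝ) * Real.sqrt (C₁ * (S:ℝ)^α)) := by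
      apply div_le_div₀ (by positivity) (by linarith [hFdiff x y hxy]) (by positivity) (hFlow x)
    -- final arithmetic
    have hsplit2 : Real.sqrt (C₂ * (4 * (S:ℝ))^α)
        = Real.sqrt C₂ * Real.sqrt (4^α) * Real.sqrt ((S:ℝ)^α) := by
      rw [Real.mul_rpow (by norm_num) hSpos.le, ← Real.sqrt_mul hC₂.le, ← Real.sqrt_mul (by positivity)]
      ring_nf
    have hsplit1 : Real.sqrt (C₁ * (S:ℝ)^α) = Real.sqrt C₁ * Real.sqrt ((S:ℝ)^α) := by
      rw [← Real.sqrt_mul hC₁.le]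
    have hP : (0:ℝ) < Real.sqrt ((S:ℝ)^α) := Real.sqrt_pos.2 (Real.rpow_pos_of_pos hSpos α)
    have hfinal : 2 * ((n:ℝ) * Real.sqrt (C₂ * (4 * (S:ℝ))^α))
        / ((S:ℝ) * Real.sqrt (C₁ * (S:ℝ)^α)) ≤ 1 / (n:ℝ) := by
      rw [hsplit1, hsplit2, div_le_div_iff₀ (by positivity) hnpos]
      have hcS : 2 * (n:ℝ)^2 * (Real.sqrt C₂ * Real.sqrt (4^α)) ≤ (S:ℝ) * Real.sqrt C₁ := by
        have := mul_le_mul_of_nonneg_right hSc hsC₁.le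
        rw [hc_def] at this
        calc 2 * (n:ℝ)^2 * (Real.sqrt C₂ * Real.sqrt (4^α))
            = 2 * (n:ℝ)^2 * (Real.sqrt C₂ * Real.sqrt (4^α) / Real.sqrt C₁) * Real.sqrt C₁ := by
              field_simp
          _ ≤ (S:ℝ) * Real.sqrt C₁ := this
      nlinarith [mul_le_mul_of_nonneg_right hcS hP.le, hP, hnpos]
    calc ‖ξ x - ξ y‖ = ‖‖F x‖⁻¹ • F x - ‖F y‖⁻¹ • F y‖ := by rw [hξ_def]
      _ ≤ 2 * ‖F x - F y‖ / ‖F x‖ := key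
      _ ≤ 2 * ((n:ℝ) * Real.sqrt (C₂ * (4 * (S:ℝ))^α)) / ((S:ℝ) * Real.sqrt (C₁ * (S:ℝ)^α)) := step2
      _ ≤ 1 / (n:ℝ) := hfinal
end

section
/- Let Γ be a finitely generated group with finite symmetric generating set Q, Z a uniformly recurrent subgroup of Γ, H ∈ Z, and r ≥ 1. Define p ≡_r q for p, q ∈ Γ/H if the rooted-labeled r-balls around p and q are isomorphic. Then ≡_r is an equivalence relation with finitely many equivalence classes, and there exists t_r > 0 such that for every p ∈ Γ/H the ball B_{t_r}(p) intersects every ≡_r-equivalence class. -/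
/-- Conjugation action of a group on its subgroups: `g • H = gHg⁻¹`. -/
def conjSub {Γ : Type*} [Group Γ] (g : Γ) (H : Subgroup Γ) : Subgroup Γ :=
  Subgroup.map (MulAut.conj g).toMonoidHom H

/-- The Chabauty-type topology on `Sub(Γ)`: the topology induced from the product
topology on `{0,1}^Γ` via `H ↦ (γ ↦ decide (γ ∈ H))`. -/
noncomputable instance chabauty {Γ : Type*} [Group Γ] : TopologicalSpace (Subgroup Γ) :=
  TopologicalSpace.induced
    (fun H (g : Γ) => @decide (g ∈ H) (Classical.dec _)) inferInstance

/-- A uniformly recurrent subgroup: a nonempty, closed, conjugation-invariant subset of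
`Sub(Γ)` on which every conjugation orbit is dense. -/
structure IsURS {Γ : Type*} [Group Γ] (Z : Set (Subgroup Γ)) : Prop where
  nonempty : Z.Nonempty
  closed : IsClosed Z
  invariant : ∀ g : Γ, ∀ H ∈ Z, conjSub g H ∈ Z
  minimal : ∀ H ∈ Z, ∀ K ∈ Z, K ∈ closure {L : Subgroup Γ | ∃ g : Γ, conjSub g H = L}

/-- The Schreier graph of a subgroup `H ≤ Γ` with respect to a generating set `Q`:
vertices are left cosets in `Γ/H`, and `x ~ y` iff some `s ∈ Q` moves one to the other. -/
def schreierGraph {Γ : Type*} [Group Γ] (Q : Finset Γ) (H : Subgroup Γ) :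
    SimpleGraph (Γ ⧸ H) where
  Adj x y := x ≠ y ∧ ∃ s ∈ Q, s • x = y ∨ s • y = x
  symm := by
    constructor; rintro x y ⟨hne, s, hs, h⟩
    exact ⟨hne.symm, s, hs, h.symm⟩
  loopless := by constructor; rintro x ⟨hne, _⟩; exact hne rfl

/-- The `R`-ball around `x` in the Schreier graph of `H`. -/
def sBall {Γ : Type*} [Group Γ] (Q : Finset Γ) (H : Subgroup Γ) (R : ℕ) (x : Γ ⧸ H) :
    Set (Γ ⧸ H) :=
  {y | (schreierGraph Q H).Reachable x y ∧ (schreierGraph Q H).dist x y ≤ R}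

/-- The rooted-labeled `R`-balls around `x ∈ Γ/H` and `y ∈ Γ/H'` are isomorphic:
there is a root-preserving bijection between them commuting with all generator labels. -/
def BallIso {Γ : Type*} [Group Γ] (Q : Finset Γ) (H H' : Subgroup Γ) (R : ℕ)
    (x : Γ ⧸ H) (y : Γ ⧸ H') : Prop :=
  ∃ φ : (Γ ⧸ H) → (Γ ⧸ H'),
    Set.BijOn φ (sBall Q H R x) (sBall Q H' R y) ∧ φ x = y ∧
    ∀ s ∈ Q, ∀ u ∈ sBall Q H R x, ∀ v ∈ sBall Q H R x, (s • u = v ↔ s • φ u = φ v)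
namespace URSP
variable {Γ : Type*} [Group Γ]

lemma mem_conjSub {g x : Γ} {H : Subgroup Γ} : x ∈ conjSub g H ↔ g⁻¹ * x * g ∈ H := by
  constructor
  · rintro ⟨h, hh, rfl⟩
    simpa [mul_assoc] using hh
  · intro h
    refine ⟨g⁻¹ * x * g, h, ?_⟩
    simp only [MulEquiv.coe_toMonoidHom, MulAut.conj_apply]
    group

lemma conjSub_mul (a b : Γ) (H : Subgroup Γ) :
    conjSub (a * b) H = conjSub a (conjSub b H) := by
  ext x
  simp only [mem_conjSub]
  constructor <;> intro h
  · convert h using 1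
    group
  · convert h using 1
    group

/-- Words over `Q` of length at most `n`. -/
def Wrds (Q : Finset Γ) (n : ℕ) : Set (List Γ) := {l | l.length ≤ n ∧ ∀ s ∈ l, s ∈ Q}

omit [Group Γ] in
lemma wrds_finite (Q : Finset Γ) (n : ℕ) : (Wrds Q n).Finite := by
  have h1 : {l : List {x // x ∈ Q} | l.length ≤ n}.Finite := List.finite_length_le _ n
  have h2 : (Wrds Q n) ⊆ (List.map (Subtype.val)) '' {l : List {x // x ∈ Q} | l.length ≤ n} := by
    rintro l ⟨hlen, hmem⟩
    refine ⟨l.attach.map (fun x => ⟨x.1, hmem x.1 x.2⟩), by simpa using hlen, by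
      simp [List.map_map]⟩
  exact (h1.image _).subset h2

/-- The pattern (isomorphism-type data) of the `r`-ball at `p`. -/
def pat (Q : Finset Γ) (r : ℕ) (H : Subgroup Γ) (p : Γ ⧸ H) : Set (List Γ × List Γ) :=
  {x | x.1 ∈ Wrds Q (r+1) ∧ x.2 ∈ Wrds Q (r+1) ∧ x.1.prod • p = x.2.prod • p}

lemma pat_range_finite (Q : Finset Γ) (r : ℕ) (H : Subgroup Γ) :
    (Set.range (pat Q r H)).Finite := by
  have : Set.range (pat Q r H) ⊆ {σ | σ ⊆ (Wrds Q (r+1)) ×ˢ (Wrds Q (r+1))} := by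
    rintro σ ⟨p, rfl⟩ x hx
    exact ⟨hx.1, hx.2.1⟩
  exact (((wrds_finite Q (r+1)).prod (wrds_finite Q (r+1))).finite_subsets).subset this


section Ball
variable (Q : Finset Γ) (H : Subgroup Γ)

lemma mem_sBall_word {R : ℕ} {x : Γ ⧸ H} {l : List Γ} (hl : l ∈ Wrds Q R) :
    l.prod • x ∈ sBall Q H R x := by
  obtain ⟨hlen, hmem⟩ := hl
  suffices h : ∀ (l : List Γ), (∀ s ∈ l, s ∈ Q) →
      ∃ w : (schreierGraph Q H).Walk x (l.prod • x), w.length ≤ l.length by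
    obtain ⟨w, hw⟩ := h l hmem
    exact ⟨⟨w⟩, le_trans (SimpleGraph.dist_le w) (le_trans hw hlen)⟩
  intro l hmem
  induction l with
  | nil =>
    have e : (List.prod [] : Γ) • x = x := by simp
    rw [e]
    exact ⟨SimpleGraph.Walk.nil, by simp⟩
  | cons s t ih =>
    obtain ⟨w, hw⟩ := ih (fun a ha => hmem a (List.mem_cons_of_mem _ ha))
    have hst : (s :: t).prod • x = s • (t.prod • x) := by
      rw [List.prod_cons, mul_smul]
    by_cases heq : s • (t.prod • x) = t.prod • x
    · rw [hst, heq]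
      exact ⟨w, le_trans hw (Nat.le_succ _)⟩
    · have hadj : (schreierGraph Q H).Adj (t.prod • x) ((s :: t).prod • x) := by
        rw [hst]
        exact ⟨fun h => heq h.symm, s, hmem s List.mem_cons_self, Or.inl rfl⟩
      exact ⟨w.concat hadj, by simp only [SimpleGraph.Walk.length_concat, List.length_cons]; omega⟩

lemma word_of_walk (hsym : ∀ s ∈ Q, s⁻¹ ∈ Q) {x y : Γ ⧸ H}
    (w : (schreierGraph Q H).Walk x y) :
    ∃ l : List Γ, (∀ s ∈ l, s ∈ Q) ∧ l.length = w.length ∧ l.prod • x = y := by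
  induction w with
  | nil => exact ⟨[], by simp, by simp, by simp⟩
  | @cons a b c hadj w ih =>
    obtain ⟨l, hlQ, hlen, hprod⟩ := ih
    obtain ⟨-, s, hsQ, hcase⟩ := hadj
    rcases hcase with h | h
    · refine ⟨l ++ [s], ?_, by simp [hlen]; rfl, ?_⟩
      · intro a ha
        rcases List.mem_append.mp ha with h' | h'
        · exact hlQ a h'
        · simp at h'; subst h'; exact hsQ
      · rw [List.prod_append, List.prod_singleton, mul_smul, h, hprod]
    · refine ⟨l ++ [s⁻¹], ?_, by simp [hlen]; rfl, ?_⟩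
      · intro a ha
        rcases List.mem_append.mp ha with h' | h'
        · exact hlQ a h'
        · simp at h'; subst h'; exact hsym s hsQ
      · rw [List.prod_append, List.prod_singleton, mul_smul, ← h]
        rw [inv_smul_smul, hprod]

lemma exists_word_of_mem_sBall (hsym : ∀ s ∈ Q, s⁻¹ ∈ Q) {R : ℕ} {x y : Γ ⧸ H}
    (hy : y ∈ sBall Q H R x) : ∃ l ∈ Wrds Q R, l.prod • x = y := by
  obtain ⟨hreach, hdist⟩ := hy
  obtain ⟨w, hw⟩ := hreach.exists_walk_length_eq_dist
  obtain ⟨l, hlQ, hlen, hprod⟩ := word_of_walk Q H hsym w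
  exact ⟨l, ⟨by omega, hlQ⟩, hprod⟩

lemma self_mem_sBall (R : ℕ) (x : Γ ⧸ H) : x ∈ sBall Q H R x := by
  have := mem_sBall_word Q H (R := R) (x := x) (l := []) ⟨by simp, by simp⟩
  simpa using this

lemma sBall_mono {R R' : ℕ} (h : R ≤ R') (x : Γ ⧸ H) : sBall Q H R x ⊆ sBall Q H R' x :=
  fun _ hy => ⟨hy.1, le_trans hy.2 h⟩

end Ball

omit [Group Γ] in
lemma wrds_mono {Q : Finset Γ} {n m : ℕ} (h : n ≤ m) : Wrds Q n ⊆ Wrds Q m :=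
  fun _ hl => ⟨le_trans hl.1 h, hl.2⟩

omit [Group Γ] in
lemma wrds_nil {Q : Finset Γ} {n : ℕ} : ([] : List Γ) ∈ Wrds Q n := ⟨by simp, by simp⟩

omit [Group Γ] in
lemma wrds_cons {Q : Finset Γ} {n : ℕ} {s : Γ} {l : List Γ} (hs : s ∈ Q)
    (hl : l ∈ Wrds Q n) : (s :: l) ∈ Wrds Q (n + 1) := by
  refine ⟨by simpa using hl.1, ?_⟩
  intro a ha
  rcases List.mem_cons.mp ha with h | h
  · subst h; exact hs
  · exact hl.2 a h

/-- Main combinatorial lemma: equal patterns give isomorphic rooted balls. -/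
lemma ballIso_of_pat_eq {Q : Finset Γ} (hsym : ∀ s ∈ Q, s⁻¹ ∈ Q)
    {H H' : Subgroup Γ} {r : ℕ} {p : Γ ⧸ H} {q : Γ ⧸ H'}
    (hpat : pat Q r H p = pat Q r H' q) : BallIso Q H H' r p q := by
  have T : ∀ l₁ l₂ : List Γ, l₁ ∈ Wrds Q (r+1) → l₂ ∈ Wrds Q (r+1) →
      (l₁.prod • p = l₂.prod • p ↔ l₁.prod • q = l₂.prod • q) := by
    intro l₁ l₂ h1 h2
    constructor
    · intro h
      exact ((Set.ext_iff.mp hpat (l₁, l₂)).mp ⟨h1, h2, h⟩).2.2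
    · intro h
      exact ((Set.ext_iff.mp hpat (l₁, l₂)).mpr ⟨h1, h2, h⟩).2.2
  have hw : ∀ u : Γ ⧸ H, ∃ l : List Γ,
      u ∈ sBall Q H r p → l ∈ Wrds Q r ∧ l.prod • p = u := by
    intro u
    by_cases hu : u ∈ sBall Q H r p
    · obtain ⟨l, hl, hlp⟩ := exists_word_of_mem_sBall Q H hsym hu
      exact ⟨l, fun _ => ⟨hl, hlp⟩⟩
    · exact ⟨[], fun h => absurd h hu⟩
  choose lw hlw using hw
  refine ⟨fun u => (lw u).prod • q, ⟨?_, ?_, ?_⟩, ?_, ?_⟩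
  · intro u hu
    exact mem_sBall_word Q H' ((hlw u hu).1)
  · intro u hu v hv h
    rw [← (hlw u hu).2, ← (hlw v hv).2]
    exact (T _ _ (wrds_mono (by omega) (hlw u hu).1)
      (wrds_mono (by omega) (hlw v hv).1)).mpr h
  · intro v hv
    obtain ⟨l, hl, hlq⟩ := exists_word_of_mem_sBall Q H' hsym hv
    have hu : l.prod • p ∈ sBall Q H r p := mem_sBall_word Q H hl
    refine ⟨l.prod • p, hu, ?_⟩
    have := (T (lw (l.prod • p)) l
      (wrds_mono (by omega) (hlw _ hu).1) (wrds_mono (by omega) hl)).mp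
      ((hlw _ hu).2)
    show (lw (l.prod • p)).prod • q = v
    rw [this, hlq]
  · have hp : p ∈ sBall Q H r p := self_mem_sBall Q H r p
    have := (T (lw p) []
      (wrds_mono (by omega) (hlw p hp).1) wrds_nil).mp
      (by rw [(hlw p hp).2]; simp)
    simpa using this
  · intro s hs u hu v hv
    have hu' := hlw u hu
    have hv' := hlw v hv
    calc s • u = v ↔ (s :: lw u).prod • p = (lw v).prod • p := by
          rw [List.prod_cons, mul_smul, hu'.2, hv'.2]
      _ ↔ (s :: lw u).prod • q = (lw v).prod • q :=
          T _ _ (wrds_cons hs hu'.1) (wrds_mono (by omega) hv'.1)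
      _ ↔ s • ((lw u).prod • q) = (lw v).prod • q := by
          rw [List.prod_cons, mul_smul]

lemma ballIso_symm {Q : Finset Γ} {H H' : Subgroup Γ} {R : ℕ} {p : Γ ⧸ H} {q : Γ ⧸ H'}
    (h : BallIso Q H H' R p q) : BallIso Q H' H R q p := by
  obtain ⟨φ, hbij, hroot, hlab⟩ := h
  have hinv := hbij.invOn_invFunOn
  refine ⟨Function.invFunOn φ (sBall Q H R p), hbij.symm hinv.symm, ?_, ?_⟩
  · rw [← hroot]
    exact hinv.1 (self_mem_sBall Q H R p)
  · intro s hs u hu v hv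
    have hu' := (hbij.symm hinv.symm).mapsTo hu
    have hv' := (hbij.symm hinv.symm).mapsTo hv
    rw [hlab s hs _ hu' _ hv', hinv.2 hu, hinv.2 hv]

lemma ballIso_trans {Q : Finset Γ} {H H' H'' : Subgroup Γ} {R : ℕ}
    {p : Γ ⧸ H} {q : Γ ⧸ H'} {z : Γ ⧸ H''}
    (h1 : BallIso Q H H' R p q) (h2 : BallIso Q H' H'' R q z) : BallIso Q H H'' R p z := by
  obtain ⟨φ, hbij, hroot, hlab⟩ := h1
  obtain ⟨φ', hbij', hroot', hlab'⟩ := h2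
  refine ⟨φ' ∘ φ, hbij'.comp hbij, by simp [hroot, hroot'], ?_⟩
  intro s hs u hu v hv
  rw [hlab s hs u hu v hv, hlab' s hs _ (hbij.mapsTo hu) _ (hbij.mapsTo hv)]
  simp

lemma class_eq_of_pat_eq {Q : Finset Γ} (hsym : ∀ s ∈ Q, s⁻¹ ∈ Q) {H : Subgroup Γ} {r : ℕ}
    {p q : Γ ⧸ H} (h : pat Q r H p = pat Q r H q) :
    {x | BallIso Q H H r p x} = {x | BallIso Q H H r q x} := by
  have hiso := ballIso_of_pat_eq hsym h
  ext x
  exact ⟨fun hx => ballIso_trans (ballIso_symm hiso) hx, fun hx => ballIso_trans hiso hx⟩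

lemma classes_finite {Q : Finset Γ} (hsym : ∀ s ∈ Q, s⁻¹ ∈ Q) {H : Subgroup Γ} {r : ℕ} :
    {C : Set (Γ ⧸ H) | ∃ p : Γ ⧸ H, C = {q : Γ ⧸ H | BallIso Q H H r p q}}.Finite := by
  classical
  set ψ : Set (List Γ × List Γ) → Set (Γ ⧸ H) := fun σ =>
    if h : ∃ p : Γ ⧸ H, pat Q r H p = σ then {x | BallIso Q H H r h.choose x} else ∅ with hψ
  have hsub : {C : Set (Γ ⧸ H) | ∃ p : Γ ⧸ H, C = {q | BallIso Q H H r p q}} ⊆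
      ψ '' Set.range (pat Q r H) := by
    rintro C ⟨p, rfl⟩
    refine ⟨pat Q r H p, ⟨p, rfl⟩, ?_⟩
    have hex : ∃ x : Γ ⧸ H, pat Q r H x = pat Q r H p := ⟨p, rfl⟩
    rw [hψ]
    simp only [dif_pos hex]
    exact (class_eq_of_pat_eq hsym hex.choose_spec).symm ▸ rfl
  exact ((pat_range_finite Q r H).image ψ).subset hsub

section Top

/-- The embedding of `Sub(Γ)` into `Γ → Bool` defining the Chabauty topology. -/
noncomputable def chMap (Γ : Type*) [Group Γ] : Subgroup Γ → Γ → Bool :=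
  fun H g => @decide (g ∈ H) (Classical.dec _)

lemma chMap_eq_true {K : Subgroup Γ} {γ : Γ} : chMap Γ K γ = true ↔ γ ∈ K := by
  simp [chMap]

lemma isInducing_chMap : Topology.IsInducing (chMap Γ) := ⟨rfl⟩

lemma injective_chMap : Function.Injective (chMap Γ) := by
  intro K K' h
  ext γ
  rw [← chMap_eq_true, ← chMap_eq_true, h]

lemma isEmbedding_chMap : Topology.IsEmbedding (chMap Γ) := ⟨isInducing_chMap, injective_chMap⟩

lemma isOpen_memSet (γ : Γ) : IsOpen {K : Subgroup Γ | γ ∈ K} := by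
  have h1 : {K : Subgroup Γ | γ ∈ K} = (chMap Γ) ⁻¹' ((fun χ : Γ → Bool => χ γ) ⁻¹' {true}) := by
    ext K; simp [chMap_eq_true]
  rw [h1]
  exact ((continuous_apply γ).isOpen_preimage _ (isOpen_discrete _)).preimage
    isInducing_chMap.continuous

lemma isOpen_notMemSet (γ : Γ) : IsOpen {K : Subgroup Γ | γ ∉ K} := by
  have h1 : {K : Subgroup Γ | γ ∉ K} = (chMap Γ) ⁻¹' ((fun χ : Γ → Bool => χ γ) ⁻¹' {false}) := by
    ext K
    simp only [Set.mem_setOf_eq, Set.mem_preimage, Set.mem_singleton_iff]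
    rw [← chMap_eq_true]
    cases h : chMap Γ K γ <;> simp
  rw [h1]
  exact ((continuous_apply γ).isOpen_preimage _ (isOpen_discrete _)).preimage
    isInducing_chMap.continuous

lemma continuous_conjMap (g : Γ) : Continuous (fun K : Subgroup Γ => conjSub g K) := by
  rw [isInducing_chMap.continuous_iff]
  have h1 : (chMap Γ) ∘ (fun K : Subgroup Γ => conjSub g K) =
      fun K γ => chMap Γ K (g⁻¹ * γ * g) := by
    funext K γ
    simp only [Function.comp_apply, chMap]
    rw [decide_eq_decide]
    exact mem_conjSub
  rw [h1]
  exact continuous_pi fun γ => (continuous_apply (g⁻¹ * γ * g)).comp isInducing_chMap.continuous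

omit [Group Γ] in
lemma isClosed_single (a : Γ) (b : Bool) : IsClosed {χ : Γ → Bool | χ a = b} := by
  have h : IsClosed ((fun χ : Γ → Bool => χ a) ⁻¹' {b}) :=
    IsClosed.preimage (continuous_apply a) (isClosed_discrete _)
  exact h

omit [Group Γ] in
lemma isOpen_single (a : Γ) (b : Bool) : IsOpen {χ : Γ → Bool | χ a = b} := by
  have h : IsOpen ((fun χ : Γ → Bool => χ a) ⁻¹' {b}) :=
    IsOpen.preimage (continuous_apply a) (isOpen_discrete _)
  exact h

lemma exists_sub_of_conditions (χ : Γ → Bool) (h1 : χ 1 = true)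
    (h2 : ∀ a b : Γ, χ a = true → χ b = true → χ (a * b) = true)
    (h3 : ∀ a : Γ, χ a = true → χ a⁻¹ = true) :
    ∃ K : Subgroup Γ, ∀ γ : Γ, γ ∈ K ↔ χ γ = true :=
  ⟨{ carrier := {g | χ g = true}, one_mem' := h1,
     mul_mem' := fun ha hb => h2 _ _ ha hb,
     inv_mem' := fun ha => h3 _ ha }, fun _ => Iff.rfl⟩

omit [Group Γ] in
lemma isClosed_imp1 (a c : Γ) :
    IsClosed {χ : Γ → Bool | χ a = true → χ c = true} := by
  have h1 : {χ : Γ → Bool | χ a = true → χ c = true} =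
      {χ : Γ → Bool | χ a = true}ᶜ ∪ {χ : Γ → Bool | χ c = true} := by
    ext χ; simp only [Set.mem_setOf_eq, Set.mem_union, Set.mem_compl_iff]; tauto
  rw [h1]
  exact ((isOpen_single a true).isClosed_compl).union (isClosed_single c true)

omit [Group Γ] in
lemma isClosed_imp2 (a b c : Γ) :
    IsClosed {χ : Γ → Bool | χ a = true → χ b = true → χ c = true} := by
  have h1 : {χ : Γ → Bool | χ a = true → χ b = true → χ c = true} =
      {χ : Γ → Bool | χ a = true}ᶜ ∪ ({χ : Γ → Bool | χ b = true}ᶜ ∪ {χ : Γ → Bool | χ c = true}) := by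
    ext χ; simp only [Set.mem_setOf_eq, Set.mem_union, Set.mem_compl_iff]; tauto
  rw [h1]
  exact ((isOpen_single a true).isClosed_compl).union
    (((isOpen_single b true).isClosed_compl).union (isClosed_single c true))

lemma isClosed_range_chMap : IsClosed (Set.range (chMap Γ)) := by
  have h1 : Set.range (chMap Γ) =
      {χ : Γ → Bool | χ 1 = true} ∩
      ((⋂ a : Γ, ⋂ b : Γ, {χ : Γ → Bool | χ a = true → χ b = true → χ (a * b) = true}) ∩
       (⋂ a : Γ, {χ : Γ → Bool | χ a = true → χ a⁻¹ = true})) := by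
    ext χ
    constructor
    · rintro ⟨K, rfl⟩
      refine ⟨chMap_eq_true.mpr K.one_mem, ?_, ?_⟩
      · simp only [Set.mem_iInter, Set.mem_setOf_eq, chMap_eq_true]
        exact fun a b ha hb => K.mul_mem ha hb
      · simp only [Set.mem_iInter, Set.mem_setOf_eq, chMap_eq_true]
        exact fun a ha => K.inv_mem ha
    · rintro ⟨h1, h2, h3⟩
      simp only [Set.mem_iInter, Set.mem_setOf_eq] at h1 h2 h3
      obtain ⟨K, hmem⟩ := exists_sub_of_conditions χ h1 (fun a b => h2 a b) (fun a => h3 a)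
      refine ⟨K, ?_⟩
      funext γ
      simp only [chMap]
      cases h : χ γ
      · exact @decide_eq_false (γ ∈ K) (Classical.dec _) (by simp [hmem γ, h])
      · exact @decide_eq_true (γ ∈ K) (Classical.dec _) ((hmem γ).mpr h)
  rw [h1]
  exact (isClosed_single 1 true).inter
    (((isClosed_iInter fun a => isClosed_iInter fun b => isClosed_imp2 a b (a*b))).inter
     (isClosed_iInter fun a => isClosed_imp1 a a⁻¹))

lemma isCompact_of_isClosed {Z : Set (Subgroup Γ)} (h : IsClosed Z) : IsCompact Z := by
  rw [isEmbedding_chMap.isCompact_iff]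
  obtain ⟨C, hC, hZC⟩ := isClosed_induced_iff.mp h
  have himg : chMap Γ '' Z = C ∩ Set.range (chMap Γ) := by
    rw [← hZC]
    exact Set.image_preimage_eq_inter_range
  rw [himg]
  exact (hC.inter isClosed_range_chMap).isCompact

end Top

section Root

lemma smul_one_eq (K : Subgroup Γ) (a : Γ) :
    a • (QuotientGroup.mk (1:Γ) : Γ ⧸ K) = QuotientGroup.mk a := by
  rw [MulAction.Quotient.smul_mk, smul_eq_mul, mul_one]

lemma mem_pat_root {Q : Finset Γ} {r : ℕ} {K : Subgroup Γ} {x : List Γ × List Γ} :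
    x ∈ pat Q r K (QuotientGroup.mk (1:Γ) : Γ ⧸ K) ↔
      x.1 ∈ Wrds Q (r+1) ∧ x.2 ∈ Wrds Q (r+1) ∧ x.1.prod⁻¹ * x.2.prod ∈ K := by
  unfold pat
  simp only [Set.mem_setOf_eq, smul_one_eq]
  rw [QuotientGroup.eq]

lemma pat_root_conj (Q : Finset Γ) (r : ℕ) (H : Subgroup Γ) (g : Γ) :
    pat Q r (conjSub g H) (QuotientGroup.mk (1:Γ) : Γ ⧸ conjSub g H) = pat Q r H (QuotientGroup.mk g) := by
  ext x
  rw [mem_pat_root]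
  unfold pat
  simp only [Set.mem_setOf_eq]
  refine and_congr_right fun _ => and_congr_right fun _ => ?_
  rw [mem_conjSub, MulAction.Quotient.smul_mk, MulAction.Quotient.smul_mk,
    QuotientGroup.eq, smul_eq_mul, smul_eq_mul]
  have he : (x.1.prod * g)⁻¹ * (x.2.prod * g) = g⁻¹ * (x.1.prod⁻¹ * x.2.prod) * g := by
    group
  rw [he]

lemma pat_root_eq_of_agree {Q : Finset Γ} {r : ℕ} {K K₀ : Subgroup Γ}
    (h : ∀ x : List Γ × List Γ, x.1 ∈ Wrds Q (r+1) → x.2 ∈ Wrds Q (r+1) →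
      (x.1.prod⁻¹ * x.2.prod ∈ K ↔ x.1.prod⁻¹ * x.2.prod ∈ K₀)) :
    pat Q r K (QuotientGroup.mk (1:Γ) : Γ ⧸ K) = pat Q r K₀ (QuotientGroup.mk (1:Γ) : Γ ⧸ K₀) := by
  ext x
  rw [mem_pat_root, mem_pat_root]
  constructor
  · rintro ⟨h1, h2, h3⟩
    exact ⟨h1, h2, (h x h1 h2).mp h3⟩
  · rintro ⟨h1, h2, h3⟩
    exact ⟨h1, h2, (h x h1 h2).mpr h3⟩

/-- The clopen neighbourhood of `K₀` of subgroups whose window agrees with `K₀`. -/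
def USet (Q : Finset Γ) (r : ℕ) (K₀ : Subgroup Γ) : Set (Subgroup Γ) :=
  {K | ∀ x ∈ (Wrds Q (r+1)) ×ˢ (Wrds Q (r+1)),
    ((x : List Γ × List Γ).1.prod⁻¹ * x.2.prod ∈ K ↔ x.1.prod⁻¹ * x.2.prod ∈ K₀)}

lemma mem_USet_self (Q : Finset Γ) (r : ℕ) (K₀ : Subgroup Γ) : K₀ ∈ USet Q r K₀ :=
  fun _ _ => Iff.rfl

lemma isOpen_USet (Q : Finset Γ) (r : ℕ) (K₀ : Subgroup Γ) : IsOpen (USet Q r K₀) := by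
  have h1 : USet Q r K₀ = ⋂ x ∈ (Wrds Q (r+1)) ×ˢ (Wrds Q (r+1)),
      {K : Subgroup Γ | ((x : List Γ × List Γ).1.prod⁻¹ * x.2.prod ∈ K ↔
        x.1.prod⁻¹ * x.2.prod ∈ K₀)} := by
    ext K
    simp only [USet, Set.mem_setOf_eq, Set.mem_iInter]
  rw [h1]
  refine Set.Finite.isOpen_biInter ((wrds_finite Q (r+1)).prod (wrds_finite Q (r+1))) ?_
  intro x _
  by_cases hc : x.1.prod⁻¹ * x.2.prod ∈ K₀
  · have h2 : {K : Subgroup Γ | (x.1.prod⁻¹ * x.2.prod ∈ K ↔ x.1.prod⁻¹ * x.2.prod ∈ K₀)} =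
        {K : Subgroup Γ | x.1.prod⁻¹ * x.2.prod ∈ K} := by
      ext K; simp [hc]
    rw [h2]; exact isOpen_memSet _
  · have h2 : {K : Subgroup Γ | (x.1.prod⁻¹ * x.2.prod ∈ K ↔ x.1.prod⁻¹ * x.2.prod ∈ K₀)} =
        {K : Subgroup Γ | x.1.prod⁻¹ * x.2.prod ∉ K} := by
      ext K; simp [hc]
    rw [h2]; exact isOpen_notMemSet _

end Root

/-- Key uniform recurrence lemma. -/
lemma exists_uniform {Q : Finset Γ} (hgen : Subgroup.closure (Q : Set Γ) = ⊤)
    (hsym : ∀ s ∈ Q, s⁻¹ ∈ Q) {Z : Set (Subgroup Γ)} (hZ : IsURS Z)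
    {H : Subgroup Γ} (hH : H ∈ Z) (r : ℕ) (q : Γ ⧸ H) :
    ∃ n : ℕ, ∀ p : Γ ⧸ H, ∃ z ∈ sBall Q H n p, pat Q r H z = pat Q r H q := by
  obtain ⟨g₀, rfl⟩ := QuotientGroup.mk_surjective q
  set K₀ := conjSub g₀ H with hK₀def
  have hK₀ : K₀ ∈ Z := hZ.invariant g₀ H hH
  -- words for group elements
  have hword : ∀ x : Γ, ∃ l : List Γ, (∀ s ∈ l, s ∈ Q) ∧ l.prod = x := by
    intro x
    have hx : x ∈ Subgroup.closure (Q : Set Γ) := hgen ▸ Subgroup.mem_top x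
    have hx' : x ∈ Submonoid.closure ((Q : Set Γ) ∪ (Q : Set Γ)⁻¹) := by
      rw [← Subgroup.closure_toSubmonoid]
      exact hx
    obtain ⟨l, hl, rfl⟩ := Submonoid.exists_list_of_mem_closure hx'
    refine ⟨l, fun s hs => ?_, rfl⟩
    rcases hl s hs with h | h
    · exact h
    · simpa using hsym s⁻¹ (by simpa using h)
  choose wrd hwrd1 hwrd2 using hword
  -- minimality: each orbit visits USet
  have hgK : ∀ K : ↥Z, ∃ g : Γ, conjSub g (K : Subgroup Γ) ∈ USet Q r K₀ := by
    rintro ⟨K, hK⟩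
    have hcl := hZ.minimal K hK K₀ hK₀
    obtain ⟨L, hL1, g, rfl⟩ :=
      (mem_closure_iff.mp hcl (USet Q r K₀) (isOpen_USet Q r K₀) (mem_USet_self Q r K₀))
    exact ⟨g, hL1⟩
  choose gK hgK' using hgK
  -- compactness: finitely many translates suffice
  have hZc : IsCompact Z := isCompact_of_isClosed hZ.closed
  have hcover : Z ⊆ ⋃ K : ↥Z, (fun L : Subgroup Γ => conjSub (gK K) L) ⁻¹' (USet Q r K₀) := by
    intro K hK
    exact Set.mem_iUnion.mpr ⟨⟨K, hK⟩, hgK' ⟨K, hK⟩⟩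
  obtain ⟨F, hF⟩ := hZc.elim_finite_subcover
    (fun K : ↥Z => (fun L : Subgroup Γ => conjSub (gK K) L) ⁻¹' (USet Q r K₀))
    (fun K => (isOpen_USet Q r K₀).preimage (continuous_conjMap (gK K))) hcover
  refine ⟨F.sup (fun K => (wrd (gK K)).length), ?_⟩
  intro p
  obtain ⟨h, rfl⟩ := QuotientGroup.mk_surjective p
  have hKZ : conjSub h H ∈ Z := hZ.invariant h H hH
  obtain ⟨K', hK'F, hK'mem⟩ := Set.mem_iUnion₂.mp (hF hKZ)
  have hpat1 : pat Q r (conjSub (gK K' * h) H) (QuotientGroup.mk (1:Γ) : Γ ⧸ conjSub (gK K' * h) H) =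
      pat Q r K₀ (QuotientGroup.mk (1:Γ) : Γ ⧸ K₀) := by
    have := hK'mem
    simp only [Set.mem_preimage, USet, Set.mem_setOf_eq] at this
    rw [conjSub_mul]
    exact pat_root_eq_of_agree fun x h1 h2 => this x ⟨h1, h2⟩
  refine ⟨QuotientGroup.mk (gK K' * h), ?_, ?_⟩
  · have hz : (wrd (gK K')).prod • (QuotientGroup.mk h : Γ ⧸ H) =
        QuotientGroup.mk (gK K' * h) := by
      rw [hwrd2, MulAction.Quotient.smul_mk, smul_eq_mul]
    rw [← hz]
    exact mem_sBall_word Q H ⟨Finset.le_sup (f := fun K => (wrd (gK K)).length) hK'F, hwrd1 _⟩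
  · rw [← pat_root_conj Q r H (gK K' * h), ← pat_root_conj Q r H g₀]
    exact hpat1

end URSP

/-- for `H` in a URS `Z` and `r ≥ 1`, the relation `p ≡_r q` ("the
rooted-labeled `r`-balls around `p` and `q` are isomorphic") is an equivalence relation
on `Γ/H` with finitely many classes, and there is `t_r > 0` such that every `t_r`-ball
in `Γ/H` meets every equivalence class. -/
theorem ball_type_equivalence_finitely_many_classes
    {Γ : Type*} [Group Γ] (Q : Finset Γ)
    (hgen : Subgroup.closure (Q : Set Γ) = ⊤)
    (hsym : ∀ s ∈ Q, s⁻¹ ∈ Q)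
    (Z : Set (Subgroup Γ)) (hZ : IsURS Z)
    (H : Subgroup Γ) (hH : H ∈ Z) (r : ℕ) (hr : 1 ≤ r) :
    Equivalence (fun p q : Γ ⧸ H => BallIso Q H H r p q) ∧
    {C : Set (Γ ⧸ H) | ∃ p : Γ ⧸ H, C = {q : Γ ⧸ H | BallIso Q H H r p q}}.Finite ∧
    ∃ t : ℕ, 0 < t ∧ ∀ p q : Γ ⧸ H, ∃ z ∈ sBall Q H t p, BallIso Q H H r q z := by
  refine ⟨⟨fun p => URSP.ballIso_of_pat_eq hsym rfl,
      fun h => URSP.ballIso_symm h, fun h1 h2 => URSP.ballIso_trans h1 h2⟩,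
    URSP.classes_finite hsym, ?_⟩
  -- uniform bound over the finitely many patterns
  have hfin : (Set.range (URSP.pat Q r H)).Finite := URSP.pat_range_finite Q r H
  haveI := hfin.to_subtype
  have key : ∀ σ : Set.range (URSP.pat Q r H), ∃ n : ℕ,
      ∀ p : Γ ⧸ H, ∃ z ∈ sBall Q H n p, URSP.pat Q r H z = (σ : Set (List Γ × List Γ)) := by
    rintro ⟨σ, q, rfl⟩
    exact URSP.exists_uniform hgen hsym hZ hH r q
  choose f hf using key
  obtain ⟨N, hN⟩ := Set.Finite.bddAbove (Set.finite_range f)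
  refine ⟨N + 1, Nat.succ_pos N, ?_⟩
  intro p q
  have hmem : URSP.pat Q r H q ∈ Set.range (URSP.pat Q r H) := ⟨q, rfl⟩
  obtain ⟨z, hz1, hz2⟩ := hf ⟨_, hmem⟩ p
  refine ⟨z, URSP.sBall_mono Q H ?_ p hz1, URSP.ballIso_of_pat_eq hsym hz2.symm⟩
  exact le_trans (hN ⟨⟨_, hmem⟩, rfl⟩) (Nat.le_succ N)
end
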